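/- Let 1 ≤ δ ≤ σ, ρ₀ > 0, and for ρ with ρ₀/4 ≤ ρ ≤ ρ₀ define M_{ρ,β} = ρ^{|β|+1}(|β|+1)^{6+2σ}/((β₂!)^{σ-δ}(|β|!)^δ). Then there is a constant C > 0 such that for all β ∈ ℤ₊² and all γ ≤ β with ⌊|β|/2⌋+1 ≤ |γ| ≤ |β|, one has binom(β,γ) · M_{ρ,β}/(M_{ρ,γ} · M_{ρ,β-γ}) ≤ C/(|β|-|γ|+1)^6. -/

import Mathlib

/-- `M_{ρ,β} = ρ^{|β|+1} (|β|+1)^{6+2σ} / ((β₂!)^{σ-δ} (|β|!)^δ)` for `β ∈ ℤ₊²`. -/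
noncomputable def Mr (σ δ ρ : ℝ) (β : ℕ × ℕ) : ℝ :=
  ρ ^ (β.1 + β.2 + 1) * (((β.1 + β.2 : ℕ) : ℝ) + 1) ^ (6 + 2 * σ) /
    ((Nat.factorial β.2 : ℝ) ^ (σ - δ) * (Nat.factorial (β.1 + β.2) : ℝ) ^ δ)

lemma vandermonde_le (b1 b2 g1 g2 : ℕ) (h1 : g1 ≤ b1) (h2 : g2 ≤ b2) :
    b1.choose g1 * b2.choose g2 ≤ (b1 + b2).choose (g1 + g2) := by
  rw [Nat.add_choose_eq]
  exact Finset.single_le_sum (f := fun (ij : ℕ × ℕ) => b1.choose ij.1 * b2.choose ij.2)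
    (fun i _ => Nat.zero_le _) (a := (g1, g2)) (Finset.HasAntidiagonal.mem_antidiagonal.mpr rfl)

theorem binom_M_bound_high (σ δ ρ₀ : ℝ) (hσ : 1 ≤ σ) (hδ : 1 ≤ δ) (hδσ : δ ≤ σ)
    (hρ₀ : 0 < ρ₀) :
    ∃ C > 0, ∀ ρ : ℝ, ρ₀ / 4 ≤ ρ → ρ ≤ ρ₀ →
      ∀ β γ : ℕ × ℕ, γ.1 ≤ β.1 → γ.2 ≤ β.2 →
        (β.1 + β.2) / 2 + 1 ≤ γ.1 + γ.2 → γ.1 + γ.2 ≤ β.1 + β.2 →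
        (Nat.choose β.1 γ.1 : ℝ) * (Nat.choose β.2 γ.2 : ℝ) * Mr σ δ ρ β /
            (Mr σ δ ρ γ * Mr σ δ ρ (β.1 - γ.1, β.2 - γ.2)) ≤
          C / ((((β.1 + β.2) - (γ.1 + γ.2) : ℕ) : ℝ) + 1) ^ 6 := by
  refine ⟨(4 / ρ₀) * 2 ^ ((6:ℝ) + 2 * σ), by positivity, ?_⟩
  intro ρ hρ1 hρ2 β γ hg1 hg2 hlow hhigh
  obtain ⟨b1, b2⟩ := β; obtain ⟨g1, g2⟩ := γ
  simp only at hg1 hg2 hlow hhigh ⊢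
  have hρpos : 0 < ρ := lt_of_lt_of_le (by positivity) hρ1
  set b : ℕ := b1 + b2 with hb
  set g : ℕ := g1 + g2 with hg
  set k : ℕ := b - g with hkdef
  have hgb : g ≤ b := hhigh
  have hkg : g + k = b := by omega
  have hd : (b1 - g1) + (b2 - g2) = k := by omega
  have h2g : b + 1 ≤ 2 * (g + 1) := by omega
  set σδ := σ - δ with hσδ
  have hσδ0 : 0 ≤ σδ := by rw [hσδ]; linarith
  have hδ0 : (0:ℝ) ≤ δ := by linarith
  unfold Mr
  simp only [← hb, ← hg, hd]
  -- positivity facts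
  have hFβ : (0:ℝ) < (b2.factorial : ℝ) ^ σδ * (b.factorial : ℝ) ^ δ := by positivity
  have hFγ : (0:ℝ) < (g2.factorial : ℝ) ^ σδ * (g.factorial : ℝ) ^ δ := by positivity
  have hFd : (0:ℝ) < ((b2 - g2).factorial : ℝ) ^ σδ * (k.factorial : ℝ) ^ δ := by positivity
  have hBβ : (0:ℝ) < ((b:ℝ) + 1) ^ ((6:ℝ) + 2 * σ) := by positivity
  have hBγ : (0:ℝ) < ((g:ℝ) + 1) ^ ((6:ℝ) + 2 * σ) := by positivity
  have hBd : (0:ℝ) < ((k:ℝ) + 1) ^ ((6:ℝ) + 2 * σ) := by positivity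
  have key : (b1.choose g1 : ℝ) * (b2.choose g2 : ℝ) *
      (ρ ^ (b + 1) * ((b:ℝ) + 1) ^ ((6:ℝ) + 2 * σ) /
        ((b2.factorial : ℝ) ^ σδ * (b.factorial : ℝ) ^ δ)) /
      (ρ ^ (g + 1) * ((g:ℝ) + 1) ^ ((6:ℝ) + 2 * σ) /
        ((g2.factorial : ℝ) ^ σδ * (g.factorial : ℝ) ^ δ) *
       (ρ ^ (k + 1) * ((k:ℝ) + 1) ^ ((6:ℝ) + 2 * σ) /
        (((b2 - g2).factorial : ℝ) ^ σδ * (k.factorial : ℝ) ^ δ))) =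
      ((b1.choose g1 : ℝ) * (b2.choose g2 : ℝ) *
        (((g2.factorial : ℝ) ^ σδ * (g.factorial : ℝ) ^ δ) *
         (((b2 - g2).factorial : ℝ) ^ σδ * (k.factorial : ℝ) ^ δ)) /
        ((b2.factorial : ℝ) ^ σδ * (b.factorial : ℝ) ^ δ)) *
      (ρ ^ (b + 1) / (ρ ^ (g + 1) * ρ ^ (k + 1))) *
      (((b:ℝ) + 1) ^ ((6:ℝ) + 2 * σ) /
        (((g:ℝ) + 1) ^ ((6:ℝ) + 2 * σ) * ((k:ℝ) + 1) ^ ((6:ℝ) + 2 * σ))) := by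
    field_simp
  rw [key]
  -- bound P1
  have hbP1 : (b1.choose g1 : ℝ) * (b2.choose g2 : ℝ) *
      (((g2.factorial : ℝ) ^ σδ * (g.factorial : ℝ) ^ δ) *
       (((b2 - g2).factorial : ℝ) ^ σδ * (k.factorial : ℝ) ^ δ)) /
      ((b2.factorial : ℝ) ^ σδ * (b.factorial : ℝ) ^ δ) ≤ 1 := by
    rw [div_le_one hFβ]
    have hfac2 : g2.factorial * (b2 - g2).factorial ≤ b2.factorial := by
      rw [← Nat.choose_mul_factorial_mul_factorial hg2, mul_assoc]
      exact Nat.le_mul_of_pos_left _ (Nat.choose_pos hg2)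
    have hA : ((g2.factorial : ℝ) * ((b2 - g2).factorial : ℝ)) ^ σδ ≤ (b2.factorial : ℝ) ^ σδ :=
      Real.rpow_le_rpow (by positivity) (by exact_mod_cast hfac2) hσδ0
    have hch : (b1.choose g1 * b2.choose g2 : ℕ) ≤ b.choose g := vandermonde_le _ _ _ _ hg1 hg2
    have hchδ : ((b.choose g : ℕ) : ℝ) ≤ ((b.choose g : ℕ) : ℝ) ^ δ := by
      nth_rewrite 1 [← Real.rpow_one ((b.choose g : ℕ) : ℝ)]
      exact Real.rpow_le_rpow_of_exponent_le (by exact_mod_cast Nat.choose_pos hgb) hδ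
    have hB : (b1.choose g1 : ℝ) * (b2.choose g2 : ℝ) *
        ((g.factorial : ℝ) * (k.factorial : ℝ)) ^ δ ≤ (b.factorial : ℝ) ^ δ := by
      calc (b1.choose g1 : ℝ) * (b2.choose g2 : ℝ) * ((g.factorial : ℝ) * (k.factorial : ℝ)) ^ δ
          ≤ ((b.choose g : ℕ) : ℝ) ^ δ * ((g.factorial : ℝ) * (k.factorial : ℝ)) ^ δ := by
            apply mul_le_mul_of_nonneg_right _ (by positivity)
            calc (b1.choose g1 : ℝ) * (b2.choose g2 : ℝ) ≤ ((b.choose g : ℕ) : ℝ) := by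
                  exact_mod_cast hch
              _ ≤ _ := hchδ
        _ = (((b.choose g : ℕ) : ℝ) * ((g.factorial : ℝ) * (k.factorial : ℝ))) ^ δ := by
            rw [← Real.mul_rpow (by positivity) (by positivity)]
        _ = (b.factorial : ℝ) ^ δ := by
            congr 1
            rw [← mul_assoc]
            exact_mod_cast congrArg (Nat.cast : ℕ → ℝ)
              (Nat.choose_mul_factorial_mul_factorial hgb)
    calc (b1.choose g1 : ℝ) * (b2.choose g2 : ℝ) *
        ((g2.factorial : ℝ) ^ σδ * (g.factorial : ℝ) ^ δ *
         (((b2 - g2).factorial : ℝ) ^ σδ * (k.factorial : ℝ) ^ δ))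
        = ((g2.factorial : ℝ) * ((b2 - g2).factorial : ℝ)) ^ σδ *
          ((b1.choose g1 : ℝ) * (b2.choose g2 : ℝ) *
            ((g.factorial : ℝ) * (k.factorial : ℝ)) ^ δ) := by
          rw [Real.mul_rpow (by positivity) (by positivity),
              Real.mul_rpow (by positivity) (by positivity)]
          ring
      _ ≤ (b2.factorial : ℝ) ^ σδ * (b.factorial : ℝ) ^ δ :=
          mul_le_mul hA hB (by positivity) (by positivity)
  -- bound P2
  have hbP2 : ρ ^ (b + 1) / (ρ ^ (g + 1) * ρ ^ (k + 1)) ≤ 4 / ρ₀ := by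
    have hq : ρ ^ (g + 1) * ρ ^ (k + 1) = ρ ^ (b + 1) * ρ := by
      rw [← pow_add, ← pow_succ]; congr 1; omega
    rw [hq, div_le_div_iff₀ (by positivity) hρ₀]
    have hpow : (0:ℝ) < ρ ^ (b + 1) := by positivity
    nlinarith [mul_le_mul_of_nonneg_left hρ1 hpow.le]
  -- bound P3
  have hbP3 : ((b:ℝ) + 1) ^ ((6:ℝ) + 2 * σ) /
      (((g:ℝ) + 1) ^ ((6:ℝ) + 2 * σ) * ((k:ℝ) + 1) ^ ((6:ℝ) + 2 * σ)) ≤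
      2 ^ ((6:ℝ) + 2 * σ) / ((k:ℝ) + 1) ^ 6 := by
    have hexp : (0:ℝ) ≤ 6 + 2 * σ := by linarith
    have hnum : ((b:ℝ) + 1) ^ ((6:ℝ) + 2 * σ) ≤
        2 ^ ((6:ℝ) + 2 * σ) * ((g:ℝ) + 1) ^ ((6:ℝ) + 2 * σ) := by
      rw [← Real.mul_rpow (by norm_num) (by positivity)]
      apply Real.rpow_le_rpow (by positivity) _ hexp
      have : (b:ℝ) + 1 ≤ 2 * ((g:ℝ) + 1) := by exact_mod_cast h2g
      linarith
    have hden : ((k:ℝ) + 1) ^ (6:ℕ) ≤ ((k:ℝ) + 1) ^ ((6:ℝ) + 2 * σ) := by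
      rw [← Real.rpow_natCast ((k:ℝ) + 1) 6]
      apply Real.rpow_le_rpow_of_exponent_le (by simp) (by push_cast; linarith)
    calc ((b:ℝ) + 1) ^ ((6:ℝ) + 2 * σ) /
        (((g:ℝ) + 1) ^ ((6:ℝ) + 2 * σ) * ((k:ℝ) + 1) ^ ((6:ℝ) + 2 * σ))
        ≤ 2 ^ ((6:ℝ) + 2 * σ) * ((g:ℝ) + 1) ^ ((6:ℝ) + 2 * σ) /
          (((g:ℝ) + 1) ^ ((6:ℝ) + 2 * σ) * ((k:ℝ) + 1) ^ 6) := by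
          apply div_le_div₀ (by positivity) hnum (by positivity)
          exact mul_le_mul_of_nonneg_left hden hBγ.le
      _ = 2 ^ ((6:ℝ) + 2 * σ) / ((k:ℝ) + 1) ^ 6 := by
          rw [mul_comm ((2:ℝ) ^ ((6:ℝ) + 2 * σ)), mul_div_mul_left _ _ hBγ.ne']
  -- combine
  calc _ ≤ 1 * (4 / ρ₀) * (2 ^ ((6:ℝ) + 2 * σ) / ((k:ℝ) + 1) ^ 6) := by
        apply mul_le_mul (mul_le_mul hbP1 hbP2 (by positivity) (by norm_num)) hbP3
          (by positivity) (by positivity)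
    _ = 4 / ρ₀ * 2 ^ ((6:ℝ) + 2 * σ) / ((k:ℝ) + 1) ^ 6 := by ring
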